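/- Let H be a real inner product space. Let J be a nonempty finite index set, let (λ_j)_{j∈J} be nonnegative reals with ∑_{j∈J} λ_j = 1, and for each j let F_j : H → ℝ be differentiable with β-Lipschitz gradient (β > 0). Let F = ∑_{j∈J} λ_j F_j, assume F is μ-strongly convex (μ > 0), and let w* ∈ H be a minimizer of F. Let η ≥ 0, let w̄ ∈ H and (w_j)_{j∈J} ⊆ H, and set g = ∑_{j∈J} λ_j ∇F_j(w_j). Then −η ⟨∇F(w̄), g⟩ ≤ −μη (F(w̄) − F(w*)) − (η/2)‖g‖² + (ηβ²/2) ∑_{j∈J} λ_j ‖w̄ − w_j‖². -/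
import Mathlib


open scoped BigOperators
open RealInnerProductSpace

/-- `g` is the gradient of `f` at `x` (via the Riesz embedding into the dual);
this only needs an inner product space, not completeness. -/
def HasGradAt {H : Type*} [NormedAddCommGroup H] [InnerProductSpace ℝ H]
    (f : H → ℝ) (g x : H) : Prop :=
  HasFDerivAt f (InnerProductSpace.toDualMap ℝ H g) x

/-- Lemma 2 of the appendix: inner-product bound for the aggregated gradient `g`
evaluated at dispersed local models, for a convex combination `F = ∑ λ_j F_j` of
β-smooth functions that is μ-strongly convex with minimizer `w*`. -/
theorem aggregated_gradient_inner_bound {H : Type*}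
    [NormedAddCommGroup H] [InnerProductSpace ℝ H]
    {ι : Type*} (s : Finset ι) (hs : s.Nonempty)
    (lam : ι → ℝ) (hlam : ∀ j ∈ s, 0 ≤ lam j) (hsum : ∑ j ∈ s, lam j = 1)
    (β : ℝ) (hβ : 0 < β)
    (F : ι → H → ℝ) (G : ι → H → H)
    (hgrad : ∀ j ∈ s, ∀ w, HasGradAt (F j) (G j w) w)
    (hlip : ∀ j ∈ s, ∀ w₁ w₂, ‖G j w₁ - G j w₂‖ ≤ β * ‖w₁ - w₂‖)
    (μ : ℝ) (hμ : 0 < μ)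
    (Ftot : H → ℝ) (hF : Ftot = fun w => ∑ j ∈ s, lam j * F j w)
    (Gtot : H → H) (hG : Gtot = fun w => ∑ j ∈ s, lam j • G j w)
    (hsc : ∀ w₁ w₂ : H,
      Ftot w₂ + ⟪Gtot w₂, w₁ - w₂⟫ + μ / 2 * ‖w₁ - w₂‖ ^ 2 ≤ Ftot w₁)
    (wstar : H) (hmin : ∀ w, Ftot wstar ≤ Ftot w)
    (η : ℝ) (hη : 0 ≤ η)
    (wbar : H) (w : ι → H)
    (g : H) (hg : g = ∑ j ∈ s, lam j • G j (w j)) :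
    -η * ⟪Gtot wbar, g⟫ ≤
      -(μ * η) * (Ftot wbar - Ftot wstar) - η / 2 * ‖g‖ ^ 2
        + η * β ^ 2 / 2 * ∑ j ∈ s, lam j * ‖wbar - w j‖ ^ 2 := by

  -- PL inequality: 2μ(F(w̄) - F(w*)) ≤ ‖∇F(w̄)‖²
  have hPL : 2 * μ * (Ftot wbar - Ftot wstar) ≤ ‖Gtot wbar‖ ^ 2 := by
    have h := hsc wstar wbar
    have hcs := abs_real_inner_le_norm (Gtot wbar) (wstar - wbar)
    have hcs' : -(‖Gtot wbar‖ * ‖wstar - wbar‖) ≤ ⟪Gtot wbar, wstar - wbar⟫ :=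
      neg_le_of_abs_le hcs
    nlinarith [sq_nonneg (‖Gtot wbar‖ - μ * ‖wstar - wbar‖), hμ.le, norm_nonneg (wstar - wbar)]
  -- Jensen + Lipschitz: ‖∇F(w̄) - g‖² ≤ β² ∑ λ_j ‖w̄ - w_j‖²
  have hdiff : Gtot wbar - g = ∑ j ∈ s, lam j • (G j wbar - G j (w j)) := by
    rw [hG, hg]
    simp [smul_sub, Finset.sum_sub_distrib]
  have hJ : ‖Gtot wbar - g‖ ^ 2 ≤ β ^ 2 * ∑ j ∈ s, lam j * ‖wbar - w j‖ ^ 2 := by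
    have h1 : ‖Gtot wbar - g‖ ≤ ∑ j ∈ s, lam j * ‖G j wbar - G j (w j)‖ := by
      rw [hdiff]
      refine (norm_sum_le _ _).trans (le_of_eq ?_)
      refine Finset.sum_congr rfl fun j hj => ?_
      rw [norm_smul, Real.norm_eq_abs, abs_of_nonneg (hlam j hj)]
    have h2 : (∑ j ∈ s, lam j * ‖G j wbar - G j (w j)‖) ^ 2
        ≤ ∑ j ∈ s, lam j * ‖G j wbar - G j (w j)‖ ^ 2 := by
      have key := Finset.sum_mul_sq_le_sq_mul_sq s (fun j => Real.sqrt (lam j))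
        (fun j => Real.sqrt (lam j) * ‖G j wbar - G j (w j)‖)
      have e1 : ∑ j ∈ s, Real.sqrt (lam j) * (Real.sqrt (lam j) * ‖G j wbar - G j (w j)‖)
          = ∑ j ∈ s, lam j * ‖G j wbar - G j (w j)‖ :=
        Finset.sum_congr rfl fun j hj => by
          rw [← mul_assoc, Real.mul_self_sqrt (hlam j hj)]
      have e2 : ∑ j ∈ s, Real.sqrt (lam j) ^ 2 = ∑ j ∈ s, lam j :=
        Finset.sum_congr rfl fun j hj => Real.sq_sqrt (hlam j hj)
      have e3 : ∑ j ∈ s, (Real.sqrt (lam j) * ‖G j wbar - G j (w j)‖) ^ 2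
          = ∑ j ∈ s, lam j * ‖G j wbar - G j (w j)‖ ^ 2 :=
        Finset.sum_congr rfl fun j hj => by
          rw [mul_pow, Real.sq_sqrt (hlam j hj)]
      rw [e1, e2, e3, hsum, one_mul] at key
      exact key
    have h3 : ∀ j ∈ s, lam j * ‖G j wbar - G j (w j)‖ ^ 2
        ≤ lam j * (β ^ 2 * ‖wbar - w j‖ ^ 2) := fun j hj => by
      have := hlip j hj wbar (w j)
      have hb := mul_le_mul this this (norm_nonneg _) (by positivity)
      nlinarith [hlam j hj, norm_nonneg (G j wbar - G j (w j))]
    calc ‖Gtot wbar - g‖ ^ 2 ≤ (∑ j ∈ s, lam j * ‖G j wbar - G j (w j)‖) ^ 2 := by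
          have hnn : (0:ℝ) ≤ ∑ j ∈ s, lam j * ‖G j wbar - G j (w j)‖ :=
            Finset.sum_nonneg fun j hj => mul_nonneg (hlam j hj) (norm_nonneg _)
          nlinarith [norm_nonneg (Gtot wbar - g)]
      _ ≤ ∑ j ∈ s, lam j * ‖G j wbar - G j (w j)‖ ^ 2 := h2
      _ ≤ ∑ j ∈ s, lam j * (β ^ 2 * ‖wbar - w j‖ ^ 2) := Finset.sum_le_sum h3
      _ = β ^ 2 * ∑ j ∈ s, lam j * ‖wbar - w j‖ ^ 2 := by
          rw [Finset.mul_sum]; exact Finset.sum_congr rfl fun j _ => by ring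
  -- polarization identity
  have hid : ‖Gtot wbar - g‖ ^ 2 = ‖Gtot wbar‖ ^ 2 - 2 * ⟪Gtot wbar, g⟫ + ‖g‖ ^ 2 :=
    norm_sub_sq_real _ _
  nlinarith [mul_le_mul_of_nonneg_left hJ hη, mul_le_mul_of_nonneg_left hPL hη,
    sq_nonneg ‖g‖]
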